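/- Let ω_j = exp(iπ(2j-1)/4), j = 1,2,3,4. If t₀ ∈ ℝ satisfies Σ_{r=1}^{4} ω_r^n·exp(ω_r·t₀) = 0 for n = 1, 2, 3, then t₀ = 0. -/

import Mathlib

noncomputable def omega (j : ℤ) : ℂ :=
  Complex.exp (Complex.I * Real.pi * (2 * j - 1) / 4)

theorem exp_sums_vanish_imp_zero (t0 : ℝ)
    (h : ∀ n : ℕ, 1 ≤ n → n ≤ 3 →
      ∑ r ∈ Finset.range 4, omega ((r : ℤ) + 1) ^ n *
        Complex.exp (omega ((r : ℤ) + 1) * (t0 : ℂ)) = 0) :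
    t0 = 0 := by
  have h1 := h 1 (by norm_num) (by norm_num)
  have h3 := h 3 (by norm_num) (by norm_num)
  norm_num [Finset.sum_range_succ] at h1 h3
  have hI : Complex.exp (Complex.I * Real.pi / 2) = Complex.I := by
    rw [show Complex.I * (Real.pi : ℂ) / 2 = ((Real.pi / 2 : ℝ) : ℂ) * Complex.I by
      push_cast; ring]
    simp [Complex.exp_mul_I, ← Complex.ofReal_cos, ← Complex.ofReal_sin]
  have hpi : Complex.exp (Complex.I * Real.pi) = -1 := by
    rw [mul_comm]; exact Complex.exp_pi_mul_I
  have h2' : omega 2 = Complex.I * omega 1 := by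
    unfold omega
    rw [show Complex.I * (Real.pi : ℂ) * (2 * (2:ℤ) - 1) / 4 =
        Complex.I * Real.pi / 2 + Complex.I * Real.pi * (2 * (1:ℤ) - 1) / 4 by
      push_cast; ring, Complex.exp_add, hI]
  have h3' : omega 3 = -omega 1 := by
    unfold omega
    rw [show Complex.I * (Real.pi : ℂ) * (2 * (3:ℤ) - 1) / 4 =
        Complex.I * Real.pi + Complex.I * Real.pi * (2 * (1:ℤ) - 1) / 4 by
      push_cast; ring, Complex.exp_add, hpi]
    ring
  have h4' : omega 4 = -(Complex.I * omega 1) := by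
    unfold omega
    rw [show Complex.I * (Real.pi : ℂ) * (2 * (4:ℤ) - 1) / 4 =
        Complex.I * Real.pi + (Complex.I * Real.pi / 2 +
          Complex.I * Real.pi * (2 * (1:ℤ) - 1) / 4) by
      push_cast; ring, Complex.exp_add, Complex.exp_add, hpi, hI]
    ring
  have hsq : omega 1 * omega 1 = Complex.I := by
    unfold omega
    rw [← Complex.exp_add, show Complex.I * (Real.pi : ℂ) * (2 * (1:ℤ) - 1) / 4 +
        Complex.I * Real.pi * (2 * (1:ℤ) - 1) / 4 = Complex.I * Real.pi / 2 by
      push_cast; ring, hI]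
  rw [h2', h3', h4'] at h1 h3
  have ha0 : omega 1 ≠ 0 := Complex.exp_ne_zero _
  have key : 2 * Complex.I * omega 1 *
      (Complex.exp (omega 1 * (t0 : ℂ)) - Complex.exp (-omega 1 * (t0 : ℂ))) = 0 := by
    linear_combination h3 + Complex.I * h1 -
      (omega 1 * ((Complex.exp (omega 1 * (t0 : ℂ)) - Complex.exp (-omega 1 * (t0 : ℂ))) -
        Complex.I * (Complex.exp (Complex.I * omega 1 * (t0 : ℂ)) -
          Complex.exp (-(Complex.I * omega 1) * (t0 : ℂ))))) * hsq -
      Complex.I * omega 1 ^ 3 * (Complex.exp (Complex.I * omega 1 * (t0 : ℂ)) -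
        Complex.exp (-(Complex.I * omega 1) * (t0 : ℂ))) * Complex.I_sq
  simp [mul_eq_zero, ha0, Complex.I_ne_zero, sub_eq_zero] at key
  have habs := congrArg (fun z : ℂ => ‖z‖) key
  rw [Complex.norm_exp, Complex.norm_exp, Real.exp_eq_exp] at habs
  have h0 : (omega 1).re * t0 = 0 := by
    simp [Complex.mul_re] at habs
    nlinarith [habs]
  have hre : (omega 1).re = Real.cos (Real.pi / 4) := by
    unfold omega
    rw [show Complex.I * (Real.pi : ℂ) * (2 * (1:ℤ) - 1) / 4 =
        ((Real.pi / 4 : ℝ) : ℂ) * Complex.I by push_cast; ring]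
    exact Complex.exp_ofReal_mul_I_re _
  have hc : Real.cos (Real.pi / 4) ≠ 0 := by
    rw [Real.cos_pi_div_four]; positivity
  rw [hre] at h0
  rcases mul_eq_zero.mp h0 with hcc | ht
  · exact absurd hcc hc
  · exact ht
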